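/- Fix a finite set Λ of lattice sites, a distinguished site x₀ ∈ Λ, and a symmetric coupling J : Λ → Λ → ℝ with J x x = 0 for all x, and let H = (1/2)·∑_{x∈Λ} ∑_{y∈Λ} J x y · σₓ³ σ_y³. Let ρ be a density matrix (indexed by configurations Λ → Fin 2) such that Tr(ρ · σ^A) = 0 for every triple A = (A₁, A₂, A₃) of pairwise disjoint subsets of Λ with A₃ ≠ ∅. Then for every t ∈ ℝ: Tr(ρ · exp(itH) σ_{x₀}¹ exp(−itH)) = Tr(ρ · σ_{x₀}¹) · ∏_{x∈Λ, x≠x₀} cos(2 t · J x₀ x). -/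

import Mathlib

open Matrix Complex
open scoped ComplexOrder

noncomputable section

/-- The three Pauli matrices `σ¹, σ², σ³` (indexed by `Fin 3` as `0, 1, 2`). -/
def pauli : Fin 3 → Matrix (Fin 2) (Fin 2) ℂ :=
  ![!![0, 1; 1, 0], !![0, -I; I, 0], !![1, 0; 0, -1]]

/-- The Pauli operator `σₓᵏ` acting at the site `x` of the finite lattice `Λ`, as a matrix
indexed by spin configurations `Λ → Fin 2`. -/
def pauliAt {Λ : Type*} [Fintype Λ] [DecidableEq Λ] (x : Λ) (k : Fin 3) :
    Matrix (Λ → Fin 2) (Λ → Fin 2) ℂ :=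
  fun f g => if ∀ y, y ≠ x → f y = g y then pauli k (f x) (g x) else 0

/-- For pairwise disjoint `A₁ A₂ A₃ ⊆ Λ`, the product
`σ^A = ∏_{x∈A₁} σₓ¹ ∏_{x∈A₂} σₓ² ∏_{x∈A₃} σₓ³`.  Since the factors act on distinct tensor
factors, this product is given entrywise by
`σ^A (f,g) = ∏_{x∈Λ} Mₓ (f x) (g x)` with `Mₓ = σᵏ` for `x ∈ A_k` and `Mₓ = 1` otherwise. -/
def sigmaProd {Λ : Type*} [Fintype Λ] [DecidableEq Λ] (A₁ A₂ A₃ : Finset Λ) :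
    Matrix (Λ → Fin 2) (Λ → Fin 2) ℂ :=
  fun f g => ∏ x : Λ,
    (if x ∈ A₁ then pauli 0 else if x ∈ A₂ then pauli 1 else
      if x ∈ A₃ then pauli 2 else 1) (f x) (g x)

/-- The generalized Ising model Hamiltonian `H = (1/2) ∑_{x,y ∈ Λ} J x y · σₓ³ σ_y³`. -/
def gImHamiltonian {Λ : Type*} [Fintype Λ] [DecidableEq Λ] (J : Λ → Λ → ℝ) :
    Matrix (Λ → Fin 2) (Λ → Fin 2) ℂ :=
  (2 : ℂ)⁻¹ • ∑ x : Λ, ∑ y : Λ, (J x y : ℂ) • (pauliAt x 2 * pauliAt y 2)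

section AuxGIMHelpers

def sgnC : Fin 2 → ℂ := ![1, -1]

lemma pauli0_apply (a b : Fin 2) : pauli 0 a b = if b = a + 1 then 1 else 0 := by
  fin_cases a <;> fin_cases b <;> simp [pauli] <;> norm_num [Fin.ext_iff]

lemma pauli1_apply_flip (a : Fin 2) : pauli 1 a (a + 1) = -I * sgnC a := by
  fin_cases a <;> simp [pauli, sgnC]

lemma pauli2_apply (a b : Fin 2) : pauli 2 a b = if a = b then sgnC a else 0 := by
  fin_cases a <;> fin_cases b <;> simp [pauli, sgnC]

lemma sgnC_sq (a : Fin 2) : sgnC a * sgnC a = 1 := by fin_cases a <;> simp [sgnC]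

lemma sgnC_flip (a : Fin 2) : sgnC (a + 1) = -sgnC a := by fin_cases a <;> simp [sgnC]

lemma sgnC_pow (a : Fin 2) (n : ℕ) : sgnC a ^ n = if Even n then 1 else sgnC a := by
  rcases Nat.even_or_odd n with h | h
  · rw [if_pos h]; fin_cases a <;> simp [sgnC, h.neg_one_pow]
  · rw [if_neg (Nat.not_even_iff_odd.mpr h)]; fin_cases a <;> simp [sgnC, h.neg_one_pow]

variable {Λ : Type*} [Fintype Λ] [DecidableEq Λ]

def flipAt (x₀ : Λ) (f : Λ → Fin 2) : Λ → Fin 2 := Function.update f x₀ (f x₀ + 1)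

lemma flipAt_apply_ne (x₀ : Λ) (f : Λ → Fin 2) {y : Λ} (h : y ≠ x₀) :
    flipAt x₀ f y = f y := Function.update_of_ne h _ _

lemma flipAt_apply_self (x₀ : Λ) (f : Λ → Fin 2) : flipAt x₀ f x₀ = f x₀ + 1 :=
  Function.update_self _ _ _

lemma flipAt_flipAt (x₀ : Λ) (f : Λ → Fin 2) : flipAt x₀ (flipAt x₀ f) = f := by
  funext y
  by_cases h : y = x₀
  · subst h
    rw [flipAt_apply_self, flipAt_apply_self]
    generalize f y = a
    fin_cases a <;> rfl
  · rw [flipAt_apply_ne _ _ h, flipAt_apply_ne _ _ h]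

lemma pauliAt_two (x : Λ) : pauliAt x 2 = Matrix.diagonal (fun f => sgnC (f x)) := by
  ext f g
  unfold pauliAt
  by_cases h : f = g
  · subst h
    simp [pauli2_apply, Matrix.diagonal_apply_eq]
  · rw [Matrix.diagonal_apply_ne _ h]
    by_cases h2 : ∀ y, y ≠ x → f y = g y
    · rw [if_pos h2, pauli2_apply, if_neg]
      intro hx
      exact h (funext fun y => by
        by_cases hy : y = x
        · subst hy; exact hx
        · exact h2 y hy)
    · rw [if_neg h2]

lemma ham_diag (J : Λ → Λ → ℝ) :
    gImHamiltonian J = Matrix.diagonal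
      (fun f => (2:ℂ)⁻¹ * ∑ x : Λ, ∑ y : Λ, (J x y : ℂ) * (sgnC (f x) * sgnC (f y))) := by
  ext f g
  by_cases h : f = g
  · subst h
    simp [gImHamiltonian, pauliAt_two, Matrix.sum_apply, Matrix.diagonal_mul_diagonal,
      Matrix.smul_apply, Matrix.diagonal_apply_eq, Finset.mul_sum]
  · simp [gImHamiltonian, pauliAt_two, Matrix.sum_apply, Matrix.diagonal_mul_diagonal,
      Matrix.smul_apply, Matrix.diagonal_apply_ne _ h]

lemma exp_smul_diag (c : ℂ) (d : (Λ → Fin 2) → ℂ) :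
    NormedSpace.exp (c • Matrix.diagonal d)
      = Matrix.diagonal (fun f => Complex.exp (c * d f)) := by
  rw [← Matrix.diagonal_smul, Matrix.exp_diagonal]
  have hexp : NormedSpace.exp (c • d) = fun f => Complex.exp (c * d f) := by
    funext f
    rw [Pi.coe_exp, ← Complex.exp_eq_exp_ℂ]
    simp [smul_eq_mul]
  rw [hexp]

lemma flipAt_eq_iff (x₀ : Λ) (f g : Λ → Fin 2) : f = flipAt x₀ g ↔ g = flipAt x₀ f := by
  constructor <;> (rintro rfl; rw [flipAt_flipAt])

lemma fin2_ne_add_one (b : Fin 2) : b ≠ b + 1 := by fin_cases b <;> decide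

lemma fin2_eq_of_ne_add_one {a b : Fin 2} (h : a ≠ b + 1) : a = b := by
  fin_cases a <;> fin_cases b <;> simp_all <;> exact absurd rfl h

lemma pauli1_diag (a : Fin 2) : pauli 1 a a = 0 := by fin_cases a <;> simp [pauli]

lemma pauliAt_zero_apply (x₀ : Λ) (g f : Λ → Fin 2) :
    pauliAt x₀ 0 g f = if f = flipAt x₀ g then 1 else 0 := by
  unfold pauliAt
  by_cases h : f = flipAt x₀ g
  · subst h
    rw [if_pos rfl, if_pos fun y hy => (flipAt_apply_ne x₀ g hy).symm, flipAt_apply_self,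
      pauli0_apply, if_pos rfl]
  · rw [if_neg h]
    by_cases h2 : ∀ y, y ≠ x₀ → g y = f y
    · have hfx : f x₀ = g x₀ := by
        refine fin2_eq_of_ne_add_one fun e => h (funext fun y => ?_)
        by_cases hy : y = x₀
        · subst hy; rw [e, flipAt_apply_self]
        · rw [flipAt_apply_ne x₀ g hy, h2 y hy]
      rw [if_pos h2, hfx, pauli0_apply, if_neg (fin2_ne_add_one _)]
    · rw [if_neg h2]

lemma sigmaProd_factor_ne {A₁ A₂ A₃ : Finset Λ} {x₀ : Λ} (hA₁ : A₁ = {x₀} ∨ A₁ = ∅)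
    (hA₂ : A₂ = {x₀} ∨ A₂ = ∅) (g f : Λ → Fin 2) {y : Λ} (hy : y ≠ x₀) (hgf : g y ≠ f y) :
    (if y ∈ A₁ then pauli 0 else if y ∈ A₂ then pauli 1 else
      if y ∈ A₃ then pauli 2 else 1) (g y) (f y) = 0 := by
  have h1 : y ∉ A₁ := by rcases hA₁ with rfl | rfl <;> simp [hy]
  have h2 : y ∉ A₂ := by rcases hA₂ with rfl | rfl <;> simp [hy]
  rw [if_neg h1, if_neg h2]
  split_ifs with h3
  · rw [pauli2_apply, if_neg hgf]
  · exact Matrix.one_apply_ne hgf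

lemma sigmaProd_one_apply (x₀ : Λ) (S : Finset Λ) (hS : x₀ ∉ S) (g f : Λ → Fin 2) :
    sigmaProd {x₀} ∅ S g f = if f = flipAt x₀ g then ∏ y ∈ S, sgnC (g y) else 0 := by
  unfold sigmaProd
  by_cases h : f = flipAt x₀ g
  · subst h
    rw [if_pos rfl, ← Finset.mul_prod_erase Finset.univ _ (Finset.mem_univ x₀)]
    have h1 : (if x₀ ∈ ({x₀} : Finset Λ) then pauli 0 else if x₀ ∈ (∅ : Finset Λ) then pauli 1
        else if x₀ ∈ S then pauli 2 else 1) (g x₀) (flipAt x₀ g x₀) = 1 := by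
      rw [if_pos (Finset.mem_singleton_self x₀), flipAt_apply_self, pauli0_apply, if_pos rfl]
    rw [h1, one_mul,
      Finset.prod_congr rfl (fun x hx => show _ = if x ∈ S then sgnC (g x) else 1 from ?_),
      Finset.prod_ite_mem, Finset.inter_eq_right.mpr
        (fun y hy => Finset.mem_erase.mpr ⟨fun e => hS (by rwa [e] at hy), Finset.mem_univ y⟩)]
    have hxne : x ≠ x₀ := (Finset.mem_erase.mp hx).1
    rw [flipAt_apply_ne x₀ g hxne]
    simp only [Finset.mem_singleton, hxne, if_false, Finset.notMem_empty]
    split_ifs with hmem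
    · rw [pauli2_apply, if_pos rfl]
    · exact Matrix.one_apply_eq _
  · rw [if_neg h]
    by_cases h2 : ∀ y, y ≠ x₀ → g y = f y
    · have hfx : f x₀ = g x₀ := by
        refine fin2_eq_of_ne_add_one fun e => h (funext fun y => ?_)
        by_cases hy : y = x₀
        · subst hy; rw [e, flipAt_apply_self]
        · rw [flipAt_apply_ne x₀ g hy, h2 y hy]
      refine Finset.prod_eq_zero (Finset.mem_univ x₀) ?_
      rw [if_pos (Finset.mem_singleton_self x₀), hfx, pauli0_apply,
        if_neg (fin2_ne_add_one _)]
    · push_neg at h2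
      obtain ⟨y, hy, hgf⟩ := h2
      exact Finset.prod_eq_zero (Finset.mem_univ y)
        (sigmaProd_factor_ne (Or.inl rfl) (Or.inr rfl) g f hy hgf)

lemma sigmaProd_two_apply (x₀ : Λ) (S : Finset Λ) (hS : x₀ ∉ S) (g f : Λ → Fin 2) :
    sigmaProd ∅ {x₀} S g f
      = if f = flipAt x₀ g then (-I * sgnC (g x₀)) * ∏ y ∈ S, sgnC (g y) else 0 := by
  unfold sigmaProd
  by_cases h : f = flipAt x₀ g
  · subst h
    rw [if_pos rfl, ← Finset.mul_prod_erase Finset.univ _ (Finset.mem_univ x₀)]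
    have h1 : (if x₀ ∈ (∅ : Finset Λ) then pauli 0 else if x₀ ∈ ({x₀} : Finset Λ) then pauli 1
        else if x₀ ∈ S then pauli 2 else 1) (g x₀) (flipAt x₀ g x₀)
        = -I * sgnC (g x₀) := by
      rw [if_neg (Finset.notMem_empty x₀), if_pos (Finset.mem_singleton_self x₀),
        flipAt_apply_self, pauli1_apply_flip]
    rw [h1,
      Finset.prod_congr rfl (fun x hx => show _ = if x ∈ S then sgnC (g x) else 1 from ?_),
      Finset.prod_ite_mem, Finset.inter_eq_right.mpr
        (fun y hy => Finset.mem_erase.mpr ⟨fun e => hS (by rwa [e] at hy), Finset.mem_univ y⟩)]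
    have hxne : x ≠ x₀ := (Finset.mem_erase.mp hx).1
    rw [flipAt_apply_ne x₀ g hxne]
    simp only [Finset.mem_singleton, hxne, if_false, Finset.notMem_empty]
    split_ifs with hmem
    · rw [pauli2_apply, if_pos rfl]
    · exact Matrix.one_apply_eq _
  · rw [if_neg h]
    by_cases h2 : ∀ y, y ≠ x₀ → g y = f y
    · have hfx : f x₀ = g x₀ := by
        refine fin2_eq_of_ne_add_one fun e => h (funext fun y => ?_)
        by_cases hy : y = x₀
        · subst hy; rw [e, flipAt_apply_self]
        · rw [flipAt_apply_ne x₀ g hy, h2 y hy]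
      refine Finset.prod_eq_zero (Finset.mem_univ x₀) ?_
      rw [if_neg (Finset.notMem_empty x₀), if_pos (Finset.mem_singleton_self x₀), hfx,
        pauli1_diag]
    · push_neg at h2
      obtain ⟨y, hy, hgf⟩ := h2
      exact Finset.prod_eq_zero (Finset.mem_univ y)
        (sigmaProd_factor_ne (Or.inr rfl) (Or.inl rfl) g f hy hgf)

lemma split_sum (x₀ : Λ) (h : Λ → ℂ) :
    ∑ x : Λ, h x = h x₀ + ∑ x ∈ Finset.univ.erase x₀, h x :=
  (Finset.add_sum_erase _ h (Finset.mem_univ x₀)).symm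

lemma sum_split (a : Λ → Λ → ℂ) (x₀ : Λ) :
    ∑ x : Λ, ∑ y : Λ, a x y
      = a x₀ x₀ + (∑ y ∈ Finset.univ.erase x₀, a x₀ y)
        + ((∑ x ∈ Finset.univ.erase x₀, a x x₀)
        + ∑ x ∈ Finset.univ.erase x₀, ∑ y ∈ Finset.univ.erase x₀, a x y) := by
  calc ∑ x : Λ, ∑ y : Λ, a x y
      = ∑ x : Λ, (a x x₀ + ∑ y ∈ Finset.univ.erase x₀, a x y) :=
        Finset.sum_congr rfl fun x _ => split_sum x₀ (a x)
    _ = (a x₀ x₀ + ∑ y ∈ Finset.univ.erase x₀, a x₀ y)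
        + ∑ x ∈ Finset.univ.erase x₀, (a x x₀ + ∑ y ∈ Finset.univ.erase x₀, a x y) := by
        rw [split_sum x₀ (fun x => a x x₀ + ∑ y ∈ Finset.univ.erase x₀, a x y)]
    _ = _ := by rw [Finset.sum_add_distrib]

lemma dDiff (x₀ : Λ) (J : Λ → Λ → ℝ) (hJsymm : ∀ x y, J x y = J y x)
    (hJdiag : ∀ x, J x x = 0) (f : Λ → Fin 2) :
    (2:ℂ)⁻¹ * (∑ x : Λ, ∑ y : Λ,
        (J x y : ℂ) * (sgnC (flipAt x₀ f x) * sgnC (flipAt x₀ f y)))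
      - (2:ℂ)⁻¹ * (∑ x : Λ, ∑ y : Λ, (J x y : ℂ) * (sgnC (f x) * sgnC (f y)))
      = -2 * sgnC (f x₀) * ∑ y ∈ Finset.univ.erase x₀, (J x₀ y : ℂ) * sgnC (f y) := by
  have hv : ∀ y : Λ, y ≠ x₀ → sgnC (flipAt x₀ f y) = sgnC (f y) := fun y hy => by
    rw [flipAt_apply_ne _ _ hy]
  have hvx : sgnC (flipAt x₀ f x₀) = -sgnC (f x₀) := by rw [flipAt_apply_self, sgnC_flip]
  have h0 : (J x₀ x₀ : ℂ) = 0 := by rw [hJdiag]; norm_num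
  have L1 : (∑ x : Λ, ∑ y : Λ, (J x y : ℂ) * (sgnC (flipAt x₀ f x) * sgnC (flipAt x₀ f y)))
      = (J x₀ x₀ : ℂ) * (sgnC (flipAt x₀ f x₀) * sgnC (flipAt x₀ f x₀))
        + (∑ y ∈ Finset.univ.erase x₀,
            (J x₀ y : ℂ) * (sgnC (flipAt x₀ f x₀) * sgnC (flipAt x₀ f y)))
        + ((∑ x ∈ Finset.univ.erase x₀,
            (J x x₀ : ℂ) * (sgnC (flipAt x₀ f x) * sgnC (flipAt x₀ f x₀)))
        + ∑ x ∈ Finset.univ.erase x₀, ∑ y ∈ Finset.univ.erase x₀,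
            (J x y : ℂ) * (sgnC (flipAt x₀ f x) * sgnC (flipAt x₀ f y))) :=
    sum_split (fun x y => (J x y : ℂ) * (sgnC (flipAt x₀ f x) * sgnC (flipAt x₀ f y))) x₀
  have L2 : (∑ x : Λ, ∑ y : Λ, (J x y : ℂ) * (sgnC (f x) * sgnC (f y)))
      = (J x₀ x₀ : ℂ) * (sgnC (f x₀) * sgnC (f x₀))
        + (∑ y ∈ Finset.univ.erase x₀, (J x₀ y : ℂ) * (sgnC (f x₀) * sgnC (f y)))
        + ((∑ x ∈ Finset.univ.erase x₀, (J x x₀ : ℂ) * (sgnC (f x) * sgnC (f x₀)))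
        + ∑ x ∈ Finset.univ.erase x₀, ∑ y ∈ Finset.univ.erase x₀,
            (J x y : ℂ) * (sgnC (f x) * sgnC (f y))) :=
    sum_split (fun x y => (J x y : ℂ) * (sgnC (f x) * sgnC (f y))) x₀
  rw [L1, L2, h0, zero_mul, zero_mul]
  have hA : (∑ y ∈ Finset.univ.erase x₀,
        (J x₀ y : ℂ) * (sgnC (flipAt x₀ f x₀) * sgnC (flipAt x₀ f y)))
      = ∑ y ∈ Finset.univ.erase x₀, -((J x₀ y : ℂ) * (sgnC (f x₀) * sgnC (f y))) :=
    Finset.sum_congr rfl fun y hy => by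
      rw [hvx, hv y (Finset.mem_erase.mp hy).1]; ring
  have hB : (∑ x ∈ Finset.univ.erase x₀,
        (J x x₀ : ℂ) * (sgnC (flipAt x₀ f x) * sgnC (flipAt x₀ f x₀)))
      = ∑ x ∈ Finset.univ.erase x₀, -((J x₀ x : ℂ) * (sgnC (f x₀) * sgnC (f x))) :=
    Finset.sum_congr rfl fun x hx => by
      rw [hvx, hv x (Finset.mem_erase.mp hx).1,
        show (J x x₀ : ℂ) = (J x₀ x : ℂ) by rw [hJsymm]]
      ring
  have hC : (∑ x ∈ Finset.univ.erase x₀, ∑ y ∈ Finset.univ.erase x₀,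
        (J x y : ℂ) * (sgnC (flipAt x₀ f x) * sgnC (flipAt x₀ f y)))
      = ∑ x ∈ Finset.univ.erase x₀, ∑ y ∈ Finset.univ.erase x₀,
        (J x y : ℂ) * (sgnC (f x) * sgnC (f y)) :=
    Finset.sum_congr rfl fun x hx => Finset.sum_congr rfl fun y hy => by
      rw [hv x (Finset.mem_erase.mp hx).1, hv y (Finset.mem_erase.mp hy).1]
  have hD : (∑ x ∈ Finset.univ.erase x₀,
        (J x x₀ : ℂ) * (sgnC (f x) * sgnC (f x₀)))
      = ∑ x ∈ Finset.univ.erase x₀, (J x₀ x : ℂ) * (sgnC (f x₀) * sgnC (f x)) :=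
    Finset.sum_congr rfl fun x _ => by
      rw [show (J x x₀ : ℂ) = (J x₀ x : ℂ) by rw [hJsymm]]; ring
  rw [hA, hB, hC, hD, Finset.sum_neg_distrib]
  have hS : (∑ y ∈ Finset.univ.erase x₀, (J x₀ y : ℂ) * (sgnC (f x₀) * sgnC (f y)))
      = sgnC (f x₀) * ∑ y ∈ Finset.univ.erase x₀, (J x₀ y : ℂ) * sgnC (f y) := by
    rw [Finset.mul_sum]
    exact Finset.sum_congr rfl fun y _ => by ring
  rw [hS]
  ring

lemma exp_factor (θ : ℝ) (a b : Fin 2) :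
    Complex.exp (-(θ:ℂ) * (sgnC a * sgnC b) * I)
      = ((Real.cos θ : ℝ) : ℂ) + (-I * ((Real.sin θ : ℝ) : ℂ)) * (sgnC a * sgnC b) := by
  rw [Complex.ofReal_cos, Complex.ofReal_sin]
  have h1 : Complex.exp ((-(θ:ℂ)) * I) = Complex.cos θ - Complex.sin θ * I := by
    rw [Complex.exp_mul_I, Complex.cos_neg, Complex.sin_neg]; ring
  have h2 : Complex.exp ((θ:ℂ) * I) = Complex.cos θ + Complex.sin θ * I :=
    Complex.exp_mul_I _
  have hs : sgnC a * sgnC b = 1 ∨ sgnC a * sgnC b = -1 := by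
    fin_cases a <;> fin_cases b <;> simp [sgnC]
  rcases hs with hs | hs <;> rw [hs]
  · rw [show -(θ:ℂ) * 1 * I = (-(θ:ℂ)) * I by ring, h1]; ring
  · rw [show -(θ:ℂ) * (-1) * I = (θ:ℂ) * I by ring, h2]; ring

lemma trace_mul_flip (x₀ : Λ) (ρ M : Matrix (Λ → Fin 2) (Λ → Fin 2) ℂ)
    (c : (Λ → Fin 2) → ℂ)
    (hM : ∀ g f, M g f = if f = flipAt x₀ g then c g else 0) :
    (ρ * M).trace = ∑ f : Λ → Fin 2, ρ f (flipAt x₀ f) * c (flipAt x₀ f) := by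
  rw [Matrix.trace]
  simp only [Matrix.diag_apply, Matrix.mul_apply, hM]
  refine Finset.sum_congr rfl fun f _ => ?_
  calc ∑ g : Λ → Fin 2, ρ f g * (if f = flipAt x₀ g then c g else 0)
      = ∑ g : Λ → Fin 2, (if g = flipAt x₀ f then ρ f g * c g else 0) := by
        simp only [flipAt_eq_iff x₀ f, mul_ite, mul_zero]
    _ = ρ f (flipAt x₀ f) * c (flipAt x₀ f) := by
        rw [Finset.sum_ite_eq' Finset.univ, if_pos (Finset.mem_univ _)]

end AuxGIMHelpers

/-- **Proposition 3.3.1 (Radin).** If the state `ρ` (a density matrix) annihilates every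
`σ^A` with `A₃ ≠ ∅`, then the expectation of the time-evolved `σ_{x₀}¹` factorizes:
`Tr(ρ e^{itH} σ_{x₀}¹ e^{-itH}) = Tr(ρ σ_{x₀}¹) ∏_{x ≠ x₀} cos(2 t J x₀ x)`. -/
theorem gIm_expectation_decay
    {Λ : Type*} [Fintype Λ] [DecidableEq Λ] (x₀ : Λ)
    (J : Λ → Λ → ℝ) (hJsymm : ∀ x y, J x y = J y x) (hJdiag : ∀ x, J x x = 0)
    (ρ : Matrix (Λ → Fin 2) (Λ → Fin 2) ℂ)
    (hρ : ρ.PosSemidef) (hρtr : ρ.trace = 1)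
    (hvanish : ∀ A₁ A₂ A₃ : Finset Λ, Disjoint A₁ A₂ → Disjoint A₁ A₃ → Disjoint A₂ A₃ →
      A₃ ≠ ∅ → (ρ * sigmaProd A₁ A₂ A₃).trace = 0)
    (t : ℝ) :
    (ρ * (NormedSpace.exp ((I * t) • gImHamiltonian J) * pauliAt x₀ 0 *
        NormedSpace.exp ((-(I * t)) • gImHamiltonian J))).trace
      = (ρ * pauliAt x₀ 0).trace *
        ∏ x ∈ Finset.univ.erase x₀, ((Real.cos (2 * t * J x₀ x) : ℝ) : ℂ) := by
  have hRHS : (ρ * pauliAt x₀ 0).trace = ∑ f : Λ → Fin 2, ρ f (flipAt x₀ f) := by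
    rw [trace_mul_flip x₀ ρ _ (fun _ => (1:ℂ)) (pauliAt_zero_apply x₀)]
    simp
  have hvan1 : ∀ T : Finset Λ, T ∈ (Finset.univ.erase x₀).powerset → T ≠ ∅ →
      ∑ f : Λ → Fin 2, ρ f (flipAt x₀ f) * ∏ y ∈ T, sgnC (f y) = 0 := by
    intro T hT hTne
    have hsub := Finset.mem_powerset.mp hT
    have hx₀T : x₀ ∉ T := fun h => (Finset.mem_erase.mp (hsub h)).1 rfl
    have h0 := hvanish {x₀} ∅ T (by simp) (Finset.disjoint_singleton_left.mpr hx₀T)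
      (by simp) hTne
    rw [trace_mul_flip x₀ ρ _ (fun g => ∏ y ∈ T, sgnC (g y))
      (sigmaProd_one_apply x₀ T hx₀T)] at h0
    rw [← h0]
    refine Finset.sum_congr rfl fun f _ => ?_
    congr 1
    exact Finset.prod_congr rfl fun y hy =>
      (congrArg sgnC (flipAt_apply_ne x₀ f (fun e => hx₀T (by rwa [e] at hy)))).symm
  have hvan2 : ∀ T : Finset Λ, T ∈ (Finset.univ.erase x₀).powerset → T ≠ ∅ →
      ∑ f : Λ → Fin 2, ρ f (flipAt x₀ f) * (sgnC (f x₀) * ∏ y ∈ T, sgnC (f y)) = 0 := by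
    intro T hT hTne
    have hsub := Finset.mem_powerset.mp hT
    have hx₀T : x₀ ∉ T := fun h => (Finset.mem_erase.mp (hsub h)).1 rfl
    have h0 := hvanish ∅ {x₀} T (by simp) (by simp)
      (Finset.disjoint_singleton_left.mpr hx₀T) hTne
    rw [trace_mul_flip x₀ ρ _ (fun g => (-I * sgnC (g x₀)) * ∏ y ∈ T, sgnC (g y))
      (sigmaProd_two_apply x₀ T hx₀T)] at h0
    have hIrw : ∑ f : Λ → Fin 2, ρ f (flipAt x₀ f) *
        ((-I * sgnC (flipAt x₀ f x₀)) * ∏ y ∈ T, sgnC (flipAt x₀ f y))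
        = I * ∑ f : Λ → Fin 2, ρ f (flipAt x₀ f) *
            (sgnC (f x₀) * ∏ y ∈ T, sgnC (f y)) := by
      rw [Finset.mul_sum]
      refine Finset.sum_congr rfl fun f _ => ?_
      rw [flipAt_apply_self, sgnC_flip,
        Finset.prod_congr rfl fun y hy =>
          congrArg sgnC (flipAt_apply_ne x₀ f (fun e => hx₀T (by rwa [e] at hy)))]
      ring
    rw [hIrw] at h0
    exact (mul_eq_zero.mp h0).resolve_left Complex.I_ne_zero
  rw [ham_diag J, exp_smul_diag, exp_smul_diag]
  beta_reduce
  have hM : ∀ g f : Λ → Fin 2,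
      ((Matrix.diagonal fun h : Λ → Fin 2 => Complex.exp ((I * ↑t) *
          ((2:ℂ)⁻¹ * ∑ x : Λ, ∑ y : Λ, (J x y : ℂ) * (sgnC (h x) * sgnC (h y)))))
        * pauliAt x₀ 0 *
        (Matrix.diagonal fun h : Λ → Fin 2 => Complex.exp ((-(I * ↑t)) *
          ((2:ℂ)⁻¹ * ∑ x : Λ, ∑ y : Λ, (J x y : ℂ) * (sgnC (h x) * sgnC (h y)))))) g f
      = if f = flipAt x₀ g then
          (fun g : Λ → Fin 2 => Complex.exp ((I * ↑t) *
            ((2:ℂ)⁻¹ * ∑ x : Λ, ∑ y : Λ, (J x y : ℂ) * (sgnC (g x) * sgnC (g y)))) *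
          Complex.exp ((-(I * ↑t)) * ((2:ℂ)⁻¹ * ∑ x : Λ, ∑ y : Λ,
            (J x y : ℂ) * (sgnC (flipAt x₀ g x) * sgnC (flipAt x₀ g y))))) g
        else 0 := by
    intro g f
    simp only [Matrix.diagonal_mul, Matrix.mul_diagonal, pauliAt_zero_apply, mul_ite, ite_mul,
      mul_one, mul_zero, zero_mul, one_mul]
    split_ifs with h
    · rw [h]
    · rfl
  rw [trace_mul_flip x₀ ρ _ _ hM]
  simp only [flipAt_flipAt]
  trans (∑ f : Λ → Fin 2, ρ f (flipAt x₀ f) *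
      ∏ y ∈ Finset.univ.erase x₀,
        ((-I * ((Real.sin (2 * t * J x₀ y) : ℝ) : ℂ)) * (sgnC (f x₀) * sgnC (f y))
          + ((Real.cos (2 * t * J x₀ y) : ℝ) : ℂ)))
  · refine Finset.sum_congr rfl fun f _ => ?_
    congr 1
    rw [← Complex.exp_add]
    rw [show (I * ↑t) * ((2:ℂ)⁻¹ * ∑ x : Λ, ∑ y : Λ,
          (J x y : ℂ) * (sgnC (flipAt x₀ f x) * sgnC (flipAt x₀ f y)))
        + (-(I * ↑t)) * ((2:ℂ)⁻¹ * ∑ x : Λ, ∑ y : Λ, (J x y : ℂ) * (sgnC (f x) * sgnC (f y)))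
        = (I * ↑t) * ((2:ℂ)⁻¹ * (∑ x : Λ, ∑ y : Λ,
            (J x y : ℂ) * (sgnC (flipAt x₀ f x) * sgnC (flipAt x₀ f y)))
          - (2:ℂ)⁻¹ * (∑ x : Λ, ∑ y : Λ, (J x y : ℂ) * (sgnC (f x) * sgnC (f y)))) by ring]
    rw [dDiff x₀ J hJsymm hJdiag f]
    have harg : (I * ↑t) * (-2 * sgnC (f x₀) *
          ∑ y ∈ Finset.univ.erase x₀, (J x₀ y : ℂ) * sgnC (f y))
        = ∑ y ∈ Finset.univ.erase x₀,
            (-(((2 * t * J x₀ y : ℝ)) : ℂ) * (sgnC (f x₀) * sgnC (f y)) * I) := by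
      rw [Finset.mul_sum, Finset.mul_sum]
      refine Finset.sum_congr rfl fun y _ => ?_
      push_cast
      ring
    rw [harg, Complex.exp_sum]
    refine Finset.prod_congr rfl fun y _ => ?_
    rw [exp_factor (2 * t * J x₀ y) (f x₀) (f y)]
    ring
  trans (∑ T ∈ (Finset.univ.erase x₀).powerset,
      ((∏ y ∈ T, (-I * ((Real.sin (2 * t * J x₀ y) : ℝ) : ℂ)))
        * ∏ y ∈ (Finset.univ.erase x₀) \ T, ((Real.cos (2 * t * J x₀ y) : ℝ) : ℂ)) *
      ∑ f : Λ → Fin 2, ρ f (flipAt x₀ f) *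
        (sgnC (f x₀) ^ T.card * ∏ y ∈ T, sgnC (f y)))
  · simp only [Finset.prod_add, Finset.mul_sum]
    rw [Finset.sum_comm]
    refine Finset.sum_congr rfl fun T hT => ?_
    refine Finset.sum_congr rfl fun f _ => ?_
    simp only [Finset.prod_mul_distrib, Finset.prod_const]
    ring
  rw [Finset.sum_eq_single (∅ : Finset Λ)
      (fun T hT hTne => ?_) (fun h => absurd (Finset.empty_mem_powerset _) h)]
  · rw [hRHS]
    simp only [Finset.prod_empty, one_mul, Finset.sdiff_empty, Finset.card_empty, pow_zero,
      mul_one]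
    rw [mul_comm]
  · have hW : (∑ f : Λ → Fin 2, ρ f (flipAt x₀ f) *
        (sgnC (f x₀) ^ T.card * ∏ y ∈ T, sgnC (f y))) = 0 := by
      rcases Nat.even_or_odd T.card with he | ho
      · simp_rw [sgnC_pow, if_pos he, one_mul]
        exact hvan1 T hT hTne
      · simp_rw [sgnC_pow, if_neg (Nat.not_even_iff_odd.mpr ho)]
        exact hvan2 T hT hTne
    rw [hW, mul_zero]

end
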